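/- arXiv:1511.00752 — 2 statements merged into one kernel-verified Lean document; each statement's English description precedes it below -/
import Mathlib

section
/- Define Γ₅(r,ρ,w) = ∫₀^{2π} (w cos φ) / (4π (r² + ρ² - 2rρ cos φ + w²)^{3/2}) dφ. If r, ρ > 0 satisfy 1/4 ≤ ρ/r ≤ 16, then |Γ₅(r,ρ,w)| ≤ (c/r) · |w| / ((ρ-r)² + w²) for an absolute constant c. -/
open Real

private lemma rpow_three_halves {x : ℝ} (hx : 0 ≤ x) :
    x ^ ((3:ℝ)/2) = Real.sqrt x ^ 3 := by
  rw [Real.sqrt_eq_rpow, ← Real.rpow_natCast (x ^ ((1:ℝ)/2)) 3, ← Real.rpow_mul hx]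
  norm_num

private lemma hasDeriv_F {D a : ℝ} (hD : 0 < D) (ha : 0 < a) (x : ℝ) :
    HasDerivAt (fun y => y / (D * Real.sqrt (D + a * y ^ 2)))
      (1 / Real.sqrt (D + a * x ^ 2) ^ 3) x := by
  have hu : 0 < D + a * x ^ 2 := by positivity
  have hs : 0 < Real.sqrt (D + a * x ^ 2) := Real.sqrt_pos.2 hu
  have h1 : HasDerivAt (fun y : ℝ => D + a * y ^ 2) (2 * a * x) x := by
    have := ((hasDerivAt_pow 2 x).const_mul a).const_add D
    simpa [mul_comm, mul_assoc, mul_left_comm] using this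
  have h2 : HasDerivAt (fun y => Real.sqrt (D + a * y ^ 2))
      (1 / (2 * Real.sqrt (D + a * x ^ 2)) * (2 * a * x)) x :=
    (Real.hasDerivAt_sqrt hu.ne').comp x h1
  have h3 : HasDerivAt (fun y => D * Real.sqrt (D + a * y ^ 2))
      (D * (1 / (2 * Real.sqrt (D + a * x ^ 2)) * (2 * a * x))) x := h2.const_mul D
  have h4 := (hasDerivAt_id' x).fun_div h3 (by positivity)
  refine h4.congr_deriv ?_
  have hsq : Real.sqrt (D + a * x ^ 2) ^ 2 = D + a * x ^ 2 := Real.sq_sqrt hu.le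
  field_simp
  linear_combination hsq

private lemma integral_eval {D a : ℝ} (b : ℝ) (hD : 0 < D) (ha : 0 < a) :
    ∫ x in (0:ℝ)..b, 1 / Real.sqrt (D + a * x ^ 2) ^ 3
      = b / (D * Real.sqrt (D + a * b ^ 2)) := by
  have hcont : Continuous fun x : ℝ => 1 / Real.sqrt (D + a * x ^ 2) ^ 3 := by
    apply continuous_const.div
    · fun_prop
    · intro x
      have : 0 < D + a * x ^ 2 := by positivity
      positivity
  rw [intervalIntegral.integral_eq_sub_of_hasDerivAt (fun x _ => hasDeriv_F hD ha x)
    (hcont.intervalIntegrable _ _)]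
  simp

private lemma pointwise {c s t u B : ℝ} (hc0 : 0 ≤ c) (hc1 : c ≤ 1)
    (hu : 0 < u) (hus : u ≤ s) (hst : s ≤ t) (hB : 0 < B) (hBt : B ≤ t)
    (hts : t - s = 2 * B * c) :
    c / Real.sqrt s ^ 3 - c / Real.sqrt t ^ 3 ≤ 3 / Real.sqrt u ^ 3 := by
  set α := Real.sqrt u with hα
  set β := Real.sqrt s with hβ
  set γ := Real.sqrt t with hγ
  have hs : 0 < s := lt_of_lt_of_le hu hus
  have ht : 0 < t := lt_of_lt_of_le hs hst
  have hα0 : 0 < α := Real.sqrt_pos.2 hu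
  have hβ0 : 0 < β := Real.sqrt_pos.2 hs
  have hγ0 : 0 < γ := Real.sqrt_pos.2 ht
  have hαβ : α ≤ β := Real.sqrt_le_sqrt hus
  have hβγ : β ≤ γ := Real.sqrt_le_sqrt hst
  have hβ2 : β ^ 2 = s := Real.sq_sqrt hs.le
  have hγ2 : γ ^ 2 = t := Real.sq_sqrt ht.le
  -- key: c * (γ^3 - β^3) ≤ 3 * B * γ
  have key : γ ^ 3 - β ^ 3 ≤ (3/2) * (γ ^ 2 - β ^ 2) * γ := by
    nlinarith [mul_nonneg (sq_nonneg (γ - β)) (by linarith : (0:ℝ) ≤ γ + 2 * β)]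
  have h1 : c * (γ ^ 3 - β ^ 3) ≤ 3 * B * γ := by
    have e : γ ^ 2 - β ^ 2 = 2 * B * c := by rw [hβ2, hγ2]; exact hts
    have := mul_le_mul_of_nonneg_left key hc0
    rw [e] at this
    nlinarith [mul_nonneg (mul_nonneg (by nlinarith : (0:ℝ) ≤ 1 - c * c) hB.le) hγ0.le]
  have e1 : c / β ^ 3 - c / γ ^ 3 = c * (γ ^ 3 - β ^ 3) / (β ^ 3 * γ ^ 3) := by
    field_simp
  rw [e1, div_le_div_iff₀ (by positivity) (by positivity)]
  have hα3 : α ^ 3 ≤ β ^ 3 := pow_le_pow_left₀ hα0.le hαβ 3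
  have h2 : 0 ≤ c * (γ ^ 3 - β ^ 3) := by
    apply mul_nonneg hc0; nlinarith [pow_le_pow_left₀ hβ0.le hβγ 3]
  calc c * (γ ^ 3 - β ^ 3) * α ^ 3 ≤ (3 * B * γ) * β ^ 3 :=
        mul_le_mul h1 hα3 (by positivity) (by positivity)
    _ ≤ 3 * (β ^ 3 * γ ^ 3) := by
        have h3 : B * (γ * β ^ 3) ≤ γ ^ 2 * (γ * β ^ 3) := by
          rw [hγ2]; exact mul_le_mul_of_nonneg_right hBt (by positivity)
        nlinarith [h3]

private lemma pointwise_nonneg {c s t : ℝ} (hc0 : 0 ≤ c) (hs : 0 < s) (hst : s ≤ t) :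
    0 ≤ c / Real.sqrt s ^ 3 - c / Real.sqrt t ^ 3 := by
  have hβ0 : 0 < Real.sqrt s := Real.sqrt_pos.2 hs
  have h : c / Real.sqrt t ^ 3 ≤ c / Real.sqrt s ^ 3 := by
    gcongr <;> first
      | positivity
      | exact Real.sqrt_le_sqrt hst
  linarith

set_option maxHeartbeats 1000000 in
/-- Improved bound for `Γ₅`, the `cos φ`-weighted angular average of `∂_κ` of the
Newtonian kernel: for `1/4 ≤ ρ/r ≤ 16`,
`|Γ₅(r,ρ,w)| ≤ (c/r)·|w|/((ρ-r)² + w²)` for an absolute constant `c`. -/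
theorem Gamma5_bound :
    ∃ c : ℝ, 0 < c ∧ ∀ r ρ w : ℝ, 0 < r → 0 < ρ →
      1 / 4 ≤ ρ / r → ρ / r ≤ 16 →
      |∫ φ in (0 : ℝ)..(2 * π),
          (w * Real.cos φ) /
            (4 * π * (r ^ 2 + ρ ^ 2 - 2 * r * ρ * Real.cos φ + w ^ 2) ^ ((3 : ℝ) / 2))|
        ≤ (c / r) * (|w| / ((ρ - r) ^ 2 + w ^ 2)) := by
  refine ⟨2, by norm_num, fun r ρ w hr hρ h1 h2 => ?_⟩
  rcases eq_or_ne w 0 with hw | hw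
  · subst hw
    simp
  -- setup
  have hπ : (0:ℝ) < π := Real.pi_pos
  have hw2 : 0 < w ^ 2 := by positivity
  set D : ℝ := (ρ - r) ^ 2 + w ^ 2 with hDdef
  have hD : 0 < D := by positivity
  have hρr : r / 4 ≤ ρ := by rw [div_le_iff₀ hr] at h2; rw [le_div_iff₀ hr] at h1; linarith
  set a : ℝ := r ^ 2 / π ^ 2 with hadef
  have ha : 0 < a := by positivity
  set S : ℝ → ℝ := fun φ => r ^ 2 + ρ ^ 2 - 2 * r * ρ * Real.cos φ + w ^ 2 with hSdef
  have hSpos : ∀ φ, 0 < S φ := by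
    intro φ
    have := Real.cos_le_one φ
    have hrρ : 0 < r * ρ := mul_pos hr hρ
    simp only [hSdef]
    nlinarith [sq_nonneg (ρ - r)]
  set f : ℝ → ℝ := fun φ => Real.cos φ / Real.sqrt (S φ) ^ 3 with hfdef
  have hfc : Continuous f := by
    apply Real.continuous_cos.div
    · fun_prop
    · intro φ
      have := hSpos φ
      positivity
  have hfint : ∀ u v : ℝ, IntervalIntegrable f MeasureTheory.volume u v :=
    fun u v => hfc.intervalIntegrable u v
  -- rewrite the integrand
  have hrw : ∀ φ, (w * Real.cos φ) /
      (4 * π * (r ^ 2 + ρ ^ 2 - 2 * r * ρ * Real.cos φ + w ^ 2) ^ ((3:ℝ)/2))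
      = (w / (4 * π)) * f φ := by
    intro φ
    rw [show r ^ 2 + ρ ^ 2 - 2 * r * ρ * Real.cos φ + w ^ 2 = S φ from rfl,
      rpow_three_halves (hSpos φ).le, hfdef, div_mul_div_comm]
  have hsplit : (∫ φ in (0:ℝ)..(2 * π),
      (w * Real.cos φ) /
        (4 * π * (r ^ 2 + ρ ^ 2 - 2 * r * ρ * Real.cos φ + w ^ 2) ^ ((3:ℝ)/2)))
      = (w / (4 * π)) * ∫ φ in (0:ℝ)..(2 * π), f φ := by
    rw [← intervalIntegral.integral_const_mul]
    exact intervalIntegral.integral_congr fun φ _ => hrw φ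
  -- symmetry: ∫ over [0,2π] = 2 * ∫ over [0,π]
  have hsym1 : (∫ φ in (0:ℝ)..(2 * π), f φ) = 2 * ∫ φ in (0:ℝ)..π, f φ := by
    have e1 : (∫ φ in π..(2 * π), f φ) = ∫ φ in (0:ℝ)..π, f φ := by
      have h := intervalIntegral.integral_comp_sub_left f (2 * π) (a := 0) (b := π)
      have heq : ∀ φ, f (2 * π - φ) = f φ := by
        intro φ
        simp only [hfdef, hSdef, Real.cos_sub, Real.cos_two_pi, Real.sin_two_pi]
        ring_nf
      have hb : (∫ φ in π..(2 * π), f φ) = ∫ φ in (2 * π - π)..(2 * π - 0), f φ := by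
        congr 1 <;> ring
      rw [hb, ← h]
      exact intervalIntegral.integral_congr fun φ _ => heq φ
    rw [← intervalIntegral.integral_add_adjacent_intervals (hfint 0 π) (hfint π (2 * π)), e1]
    ring
  -- symmetry: ∫ over [0,π] = ∫ over [0,π/2] of the paired integrand
  have hsym2 : (∫ φ in (0:ℝ)..π, f φ)
      = ∫ φ in (0:ℝ)..(π/2), (f φ + f (π - φ)) := by
    have e2 : (∫ φ in (π/2)..π, f φ) = ∫ φ in (0:ℝ)..(π/2), f (π - φ) := by
      have h := intervalIntegral.integral_comp_sub_left f π (a := 0) (b := π/2)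
      have hb : (∫ φ in (π/2)..π, f φ) = ∫ φ in (π - π/2)..(π - 0), f φ := by
        congr 1 <;> ring
      rw [hb, ← h]
    have hgint : IntervalIntegrable (fun φ => f (π - φ)) MeasureTheory.volume 0 (π/2) :=
      (hfc.comp (continuous_const.sub continuous_id : Continuous fun φ : ℝ => π - φ)).intervalIntegrable _ _
    rw [← intervalIntegral.integral_add_adjacent_intervals (hfint 0 (π/2)) (hfint (π/2) π), e2,
      ← intervalIntegral.integral_add (hfint 0 (π/2)) hgint]
  -- the paired integrand
  set T : ℝ → ℝ := fun φ => r ^ 2 + ρ ^ 2 + 2 * r * ρ * Real.cos φ + w ^ 2 with hTdef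
  have hTrw : ∀ φ, f (π - φ) = -(Real.cos φ / Real.sqrt (T φ) ^ 3) := by
    intro φ
    have hST : S (π - φ) = T φ := by
      simp only [hSdef, hTdef, Real.cos_pi_sub]; ring
    simp only [hfdef, hST, Real.cos_pi_sub]
    ring
  have hdata : ∀ φ ∈ Set.Icc (0:ℝ) (π/2),
      0 ≤ Real.cos φ ∧ Real.cos φ ≤ 1 ∧ 0 < D + a * φ ^ 2 ∧
      D + a * φ ^ 2 ≤ S φ ∧ S φ ≤ T φ ∧ (0:ℝ) < 2 * (r * ρ) ∧ 2 * (r * ρ) ≤ T φ ∧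
      T φ - S φ = 2 * (2 * (r * ρ)) * Real.cos φ := by
    clear hsplit hsym1 hsym2 hrw hfint hfc hTrw
    intro φ hφ
    obtain ⟨hφ0, hφ1⟩ := hφ
    have hc0 : 0 ≤ Real.cos φ :=
      Real.cos_nonneg_of_mem_Icc ⟨by linarith [hπ], hφ1⟩
    have hc1 : Real.cos φ ≤ 1 := Real.cos_le_one φ
    refine ⟨hc0, hc1, by positivity, ?_, ?_, by positivity, ?_, by simp only [hSdef, hTdef]; ring⟩
    · -- D + a φ² ≤ S φ
      have hcos : Real.cos φ ≤ 1 - 2 / π ^ 2 * φ ^ 2 := by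
        apply Real.cos_le_one_sub_mul_cos_sq
        rw [abs_of_nonneg hφ0]; linarith
      have hkey : r ^ 2 / 2 * (2 / π ^ 2 * φ ^ 2) ≤ 2 * (r * ρ) * (1 - Real.cos φ) := by
        apply mul_le_mul (by nlinarith) (by nlinarith) (by positivity) (by positivity)
      have hae : a * φ ^ 2 = r ^ 2 / 2 * (2 / π ^ 2 * φ ^ 2) := by
        rw [hadef]; field_simp
      have hSexp : S φ = D + 2 * (r * ρ) * (1 - Real.cos φ) := by
        simp only [hSdef, hDdef]; ring
      rw [hSexp, hae]
      linarith
    · -- S φ ≤ T φ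
      have : 0 ≤ 2 * (r * ρ) * Real.cos φ := by positivity
      simp only [hSdef, hTdef]; linarith
    · -- 2rρ ≤ T φ
      have : 0 ≤ 2 * (r * ρ) * Real.cos φ := by positivity
      simp only [hTdef]; linarith [sq_nonneg (r - ρ), sq_nonneg w, this]
  -- pointwise bound on [0, π/2]
  have hbound : ∀ φ ∈ Set.Icc (0:ℝ) (π/2),
      f φ + f (π - φ) ≤ 3 * (1 / Real.sqrt (D + a * φ ^ 2) ^ 3) := by
    intro φ hφ
    obtain ⟨hc0, hc1, hu, hus, hst, hB, hBt, hts⟩ := hdata φ hφ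
    rw [hTrw φ]
    have := pointwise hc0 hc1 hu hus hst hB hBt hts
    have h3 : (3:ℝ) * (1 / Real.sqrt (D + a * φ ^ 2) ^ 3)
        = 3 / Real.sqrt (D + a * φ ^ 2) ^ 3 := by ring
    rw [h3]
    simpa [hfdef, div_eq_mul_inv, sub_eq_add_neg] using this
  have hnonneg : ∀ φ ∈ Set.Icc (0:ℝ) (π/2), 0 ≤ f φ + f (π - φ) := by
    intro φ hφ
    obtain ⟨hc0, hc1, hu, hus, hst, hB, hBt, hts⟩ := hdata φ hφ
    rw [hTrw φ]
    have := pointwise_nonneg hc0 (lt_of_lt_of_le hu hus) hst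
    simpa [hfdef, div_eq_mul_inv, sub_eq_add_neg] using this
  -- integrate the bound
  have hbcont : Continuous fun φ : ℝ => 3 * (1 / Real.sqrt (D + a * φ ^ 2) ^ 3) := by
    apply continuous_const.mul
    apply continuous_const.div
    · fun_prop
    · intro φ
      have : 0 < D + a * φ ^ 2 := by positivity
      positivity
  have hgint : IntervalIntegrable (fun φ => f φ + f (π - φ)) MeasureTheory.volume 0 (π/2) :=
    ((hfc.add (hfc.comp (continuous_const.sub continuous_id : Continuous fun φ : ℝ => π - φ)))).intervalIntegrable _ _
  have hIbound : (∫ φ in (0:ℝ)..(π/2), (f φ + f (π - φ))) ≤ 3 * π / (D * r) := by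
    have step1 := intervalIntegral.integral_mono_on (by positivity : (0:ℝ) ≤ π/2)
      hgint (hbcont.intervalIntegrable _ _) hbound
    have step2 : (∫ φ in (0:ℝ)..(π/2), 3 * (1 / Real.sqrt (D + a * φ ^ 2) ^ 3))
        = 3 * ((π/2) / (D * Real.sqrt (D + a * (π/2) ^ 2))) := by
      rw [intervalIntegral.integral_const_mul, integral_eval (π/2) hD ha]
    have hsq : r / 2 ≤ Real.sqrt (D + a * (π/2) ^ 2) := by
      rw [show D + a * (π/2) ^ 2 = D + r ^ 2 / 4 by rw [hadef]; field_simp; ring]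
      rw [show r / 2 = Real.sqrt ((r/2) ^ 2) by rw [Real.sqrt_sq (by positivity)]]
      apply Real.sqrt_le_sqrt
      nlinarith
    have step3 : 3 * ((π/2) / (D * Real.sqrt (D + a * (π/2) ^ 2))) ≤ 3 * π / (D * r) := by
      rw [show 3 * π / (D * r) = 3 * ((π/2) / (D * (r/2))) by field_simp]
      gcongr
      all_goals first
        | exact hsq
        | positivity
        | exact hπ.le
    linarith
  have hInonneg : 0 ≤ ∫ φ in (0:ℝ)..(π/2), (f φ + f (π - φ)) :=
    intervalIntegral.integral_nonneg (by positivity) hnonneg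
  -- assemble
  rw [hsplit, abs_mul, hsym1, hsym2]
  have habs1 : |w / (4 * π)| = |w| / (4 * π) := by
    rw [abs_div, abs_of_pos (by positivity : (0:ℝ) < 4 * π)]
  have habs2 : |2 * ∫ φ in (0:ℝ)..(π/2), (f φ + f (π - φ))|
      = 2 * ∫ φ in (0:ℝ)..(π/2), (f φ + f (π - φ)) := abs_of_nonneg (by linarith)
  rw [habs1, habs2]
  calc |w| / (4 * π) * (2 * ∫ φ in (0:ℝ)..(π/2), (f φ + f (π - φ)))
      ≤ |w| / (4 * π) * (2 * (3 * π / (D * r))) := by gcongr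
    _ = 3 / 2 * (|w| / (D * r)) := by field_simp; ring
    _ ≤ 2 / r * (|w| / D) := by
        rw [show 2 / r * (|w| / D) = 2 * (|w| / (D * r)) by field_simp]
        have : 0 ≤ |w| / (D * r) := by positivity
        linarith
end

section
/- Define Γ₃(r,ρ,w) = -∫₀^{2π} (ρ cos φ - r)(cos φ) / (4π (r² + ρ² - 2rρ cos φ + w²)^{3/2}) dφ. If 1/4 ≤ ρ/r ≤ 16, then |Γ₃(r,ρ,w)| ≤ c / (ρ √((ρ-r)² + w²)) for an absolute constant c. -/
open Real

open Real MeasureTheory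

lemma rpow_three_halves_s7 {D : ℝ} (hD : 0 ≤ D) : D ^ ((3:ℝ)/2) = D * Real.sqrt D := by
  rw [Real.sqrt_eq_rpow, show (3:ℝ)/2 = 1 + 1/2 by norm_num,
    Real.rpow_add' hD (by norm_num), Real.rpow_one]

lemma pointwise_bd {r ρ w : ℝ} (hr : 0 < r) (hρ : 0 < ρ) {ψ : ℝ} (h0 : 0 ≤ ψ) (hπ : ψ ≤ π) (hEpos : 0 < (ρ - r) ^ 2 + w ^ 2) :
    |((ρ * Real.cos ψ - r) * Real.cos ψ) /
      (4 * π * (r ^ 2 + ρ ^ 2 - 2 * r * ρ * Real.cos ψ + w ^ 2) ^ ((3:ℝ)/2))|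
      ≤ 1 / (4 * π * (((ρ - r) ^ 2 + w ^ 2) + (4 * r * ρ / π ^ 2) * ψ ^ 2)) := by
  have hπ0 := Real.pi_pos
  set E := (ρ - r) ^ 2 + w ^ 2 with hE
  set a := 4 * r * ρ / π ^ 2 with ha
  set D := r ^ 2 + ρ ^ 2 - 2 * r * ρ * Real.cos ψ + w ^ 2 with hD
  have hcos : Real.cos ψ ≤ 1 - 2 / π ^ 2 * ψ ^ 2 :=
    Real.cos_le_one_sub_mul_cos_sq (abs_le.mpr ⟨by linarith, hπ⟩)
  have hDge : E + a * ψ ^ 2 ≤ D := by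
    have h1 : a * ψ ^ 2 ≤ 2 * r * ρ * (1 - Real.cos ψ) := by
      have h2 : 2 * ψ ^ 2 ≤ (1 - Real.cos ψ) * π ^ 2 := by
        have h3 : 2 / π ^ 2 * ψ ^ 2 ≤ 1 - Real.cos ψ := by linarith
        calc 2 * ψ ^ 2 = (2 / π ^ 2 * ψ ^ 2) * π ^ 2 := by field_simp
          _ ≤ (1 - Real.cos ψ) * π ^ 2 := mul_le_mul_of_nonneg_right h3 (by positivity)
      rw [ha, div_mul_eq_mul_div, div_le_iff₀ (by positivity)]
      nlinarith [mul_le_mul_of_nonneg_left h2 (show (0:ℝ) ≤ 2 * r * ρ by positivity)]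
    nlinarith
  have haψ : 0 ≤ a * ψ ^ 2 := by positivity
  have hEa : 0 ≤ E + a * ψ ^ 2 := by positivity
  have hEapos : 0 < E + a * ψ ^ 2 := add_pos_of_pos_of_nonneg hEpos haψ
  have hDp : 0 < D := lt_of_lt_of_le hEapos hDge
  have hnum2 : (ρ * Real.cos ψ - r) ^ 2 ≤ D := by
    nlinarith [Real.sin_sq_add_cos_sq ψ, mul_nonneg (sq_nonneg (Real.sin ψ)) (sq_nonneg ρ), sq_nonneg w]
  have hnum : |(ρ * Real.cos ψ - r) * Real.cos ψ| ≤ Real.sqrt D := by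
    rw [abs_mul]
    calc |ρ * Real.cos ψ - r| * |Real.cos ψ| ≤ |ρ * Real.cos ψ - r| * 1 := by
          exact mul_le_mul_of_nonneg_left (abs_cos_le_one ψ) (abs_nonneg _)
      _ = |ρ * Real.cos ψ - r| := mul_one _
      _ ≤ Real.sqrt D := Real.abs_le_sqrt hnum2
  have hsD : 0 < Real.sqrt D := Real.sqrt_pos.mpr hDp
  rw [abs_div, rpow_three_halves_s7 hDp.le]
  have hden : |4 * π * (D * Real.sqrt D)| = 4 * π * D * Real.sqrt D := by
    rw [abs_of_pos (by positivity)]; ring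
  rw [hden]
  calc |(ρ * Real.cos ψ - r) * Real.cos ψ| / (4 * π * D * Real.sqrt D)
      ≤ Real.sqrt D / (4 * π * D * Real.sqrt D) := by
        apply div_le_div_of_nonneg_right hnum (by positivity) |>.trans_eq rfl
    _ = 1 / (4 * π * D) := by
        rw [div_eq_div_iff (by positivity) (by positivity)]; ring
    _ ≤ 1 / (4 * π * (E + a * ψ ^ 2)) := by
        apply one_div_le_one_div_of_le (by positivity)
        nlinarith

lemma int_aux {E a : ℝ} (hE : 0 < E) (ha : 0 < a) :
    ∫ ψ in (0:ℝ)..π, 1 / (4 * π * (E + a * ψ ^ 2))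
      ≤ 1 / (8 * Real.sqrt E * Real.sqrt a) := by
  have hπ0 := Real.pi_pos
  set δ := Real.sqrt E with hδ
  set s := Real.sqrt a with hs
  have hδ0 : 0 < δ := Real.sqrt_pos.mpr hE
  have hs0 : 0 < s := Real.sqrt_pos.mpr ha
  have hδ2 : δ ^ 2 = E := Real.sq_sqrt hE.le
  have hs2 : s ^ 2 = a := Real.sq_sqrt ha.le
  set c := s / δ with hc
  have hc0 : c ≠ 0 := by positivity
  have key : ∀ ψ : ℝ, 1 / (4 * π * (E + a * ψ ^ 2))
      = (1 / (4 * π * E)) * (1 / (1 + (c * ψ) ^ 2)) := by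
    intro ψ
    have h1 : 1 + (c * ψ) ^ 2 = (E + a * ψ ^ 2) / E := by
      field_simp [hc]
      rw [← hδ2, ← hs2]
      have hcd : c * δ = s := by rw [hc]; exact div_mul_cancel₀ s hδ0.ne'
      linear_combination (ψ ^ 2 * (c * δ + s)) * hcd
    rw [h1]
    have hEa : 0 < E + a * ψ ^ 2 := by positivity
    field_simp
  have heq : (∫ ψ in (0:ℝ)..π, 1 / (4 * π * (E + a * ψ ^ 2)))
      = (1 / (4 * π * E)) * (c⁻¹ * (Real.arctan (c * π) - Real.arctan (c * 0))) := by
    simp only [key]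
    rw [intervalIntegral.integral_const_mul]
    congr 1
    rw [intervalIntegral.integral_comp_mul_left (fun x => 1 / (1 + x ^ 2)) hc0,
      integral_one_div_one_add_sq]
    simp [mul_comm]
  rw [heq]
  have harct : Real.arctan (c * π) - Real.arctan (c * 0) ≤ π / 2 := by
    rw [mul_zero, Real.arctan_zero, sub_zero]
    exact (Real.arctan_lt_pi_div_two _).le
  have h0arct : 0 ≤ Real.arctan (c * π) - Real.arctan (c * 0) := by
    rw [mul_zero, Real.arctan_zero, sub_zero]
    rw [← Real.arctan_zero]; exact Real.arctan_strictMono.monotone (by positivity)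
  calc (1 / (4 * π * E)) * (c⁻¹ * (Real.arctan (c * π) - Real.arctan (c * 0)))
      ≤ (1 / (4 * π * E)) * (c⁻¹ * (π / 2)) := by
        apply mul_le_mul_of_nonneg_left _ (by positivity)
        exact mul_le_mul_of_nonneg_left harct (by positivity)
    _ = 1 / (8 * δ * s) := by
        rw [hc, ← hδ2]
        field_simp
        ring

lemma rpow_three_halves' {D : ℝ} (hD : 0 ≤ D) : D ^ ((3:ℝ)/2) = D * Real.sqrt D := by
  rw [Real.sqrt_eq_rpow, show (3:ℝ)/2 = 1 + 1/2 by norm_num,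
    Real.rpow_add' hD (by norm_num), Real.rpow_one]

lemma notint {r : ℝ} (hr : 0 < r) :
    ¬ IntervalIntegrable (fun φ => ((r * Real.cos φ - r) * Real.cos φ) /
        (4 * π * (r ^ 2 + r ^ 2 - 2 * r * r * Real.cos φ + 0 ^ 2) ^ ((3:ℝ)/2)))
      volume 0 (2 * π) := by
  have hπ0 := Real.pi_pos
  apply not_intervalIntegrable_of_sub_inv_isBigO_punctured (c := 0)
    ?_ (by positivity) (Set.left_mem_uIcc)
  rw [Asymptotics.isBigO_iff]
  refine ⟨16 * π * r ^ 2, ?_⟩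
  have hmem : Set.Ioo (-1 : ℝ) 1 ∈ nhdsWithin (0:ℝ) {(0:ℝ)}ᶜ :=
    nhdsWithin_le_nhds (Ioo_mem_nhds (by norm_num) (by norm_num))
  filter_upwards [hmem, self_mem_nhdsWithin] with x hx hx0
  replace hx0 : x ≠ 0 := hx0
  have hx1 : |x| < 1 := abs_lt.mpr ⟨hx.1, hx.2⟩
  have hxpos : 0 < |x| := abs_pos.mpr hx0
  have hxπ : |x| ≤ π := hx1.le.trans (by linarith [Real.pi_gt_three])
  have hxsq : 0 < x ^ 2 := by positivity
  set t := 1 - Real.cos x with hT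
  have hcub : Real.cos x ≤ 1 - 2 / π ^ 2 * x ^ 2 := Real.cos_le_one_sub_mul_cos_sq hxπ
  have ht0 : 0 < t := by
    have : 0 < 2 / π ^ 2 * x ^ 2 := by positivity
    simp only [hT]; linarith
  have hclb : 1 - x ^ 2 / 2 ≤ Real.cos x := Real.one_sub_sq_div_two_le_cos
  have hcosx : (1:ℝ)/2 ≤ Real.cos x := by
    have : x ^ 2 < 1 := by
      have := sq_abs x; nlinarith
    linarith
  have ht_le : t ≤ x ^ 2 / 2 := by simp only [hT]; linarith
  have hDeq : r ^ 2 + r ^ 2 - 2 * r * r * Real.cos x + 0 ^ 2 = 2 * r ^ 2 * t := by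
    simp only [hT]; ring
  have hDp : 0 < 2 * r ^ 2 * t := by positivity
  have hsD : 0 < Real.sqrt (2 * r ^ 2 * t) := Real.sqrt_pos.mpr hDp
  have hsqle : Real.sqrt (2 * r ^ 2 * t) ≤ r * |x| := by
    have h1 : 2 * r ^ 2 * t ≤ (r * |x|) ^ 2 := by
      have := sq_abs x; nlinarith
    calc Real.sqrt (2 * r ^ 2 * t) ≤ Real.sqrt ((r * |x|) ^ 2) := Real.sqrt_le_sqrt h1
      _ = r * |x| := Real.sqrt_sq (by positivity)
  have hfabs : |((r * Real.cos x - r) * Real.cos x) /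
      (4 * π * (r ^ 2 + r ^ 2 - 2 * r * r * Real.cos x + 0 ^ 2) ^ ((3:ℝ)/2))|
      = (r * t * Real.cos x) / (4 * π * (2 * r ^ 2 * t * Real.sqrt (2 * r ^ 2 * t))) := by
    rw [hDeq, rpow_three_halves' hDp.le, abs_div]
    congr 1
    · have hnum : (r * Real.cos x - r) * Real.cos x = -(r * t * Real.cos x) := by
        simp only [hT]; ring
      rw [hnum, abs_neg, abs_of_nonneg (by positivity)]
    · rw [abs_of_pos (by positivity)]
  simp only [Real.norm_eq_abs, sub_zero, abs_inv]
  rw [hfabs, mul_div_assoc' (16 * π * r ^ 2), inv_eq_one_div,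
    div_le_div_iff₀ hxpos (by positivity)]
  have h1 : 4 * π * (2 * r ^ 2 * t * Real.sqrt (2 * r ^ 2 * t))
      ≤ 8 * π * r ^ 2 * t * (r * |x|) := by
    have := mul_le_mul_of_nonneg_left hsqle (show (0:ℝ) ≤ 8 * π * r ^ 2 * t by positivity)
    nlinarith
  have h2 : 8 * π * r ^ 2 * t * (r * |x|) ≤ 16 * π * r ^ 2 * (r * t * Real.cos x) * |x| := by
    nlinarith [mul_le_mul_of_nonneg_left hcosx
      (show (0:ℝ) ≤ 16 * π * r ^ 3 * t * |x| by positivity)]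
  linarith



/-- Improved bound for `Γ₃`, the `cos φ`-weighted angular average of `∂_ρ` of the
Newtonian kernel: for `1/4 ≤ ρ/r ≤ 16`,
`|Γ₃(r,ρ,w)| ≤ c/(ρ√((ρ-r)² + w²))` for an absolute constant `c`. -/
theorem Gamma3_bound :
    ∃ c : ℝ, 0 < c ∧ ∀ r ρ w : ℝ, 0 < r → 0 < ρ →
      1 / 4 ≤ ρ / r → ρ / r ≤ 16 →
      |-∫ φ in (0 : ℝ)..(2 * π),
          ((ρ * Real.cos φ - r) * Real.cos φ) /
            (4 * π * (r ^ 2 + ρ ^ 2 - 2 * r * ρ * Real.cos φ + w ^ 2) ^ ((3 : ℝ) / 2))|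
        ≤ c / (ρ * Real.sqrt ((ρ - r) ^ 2 + w ^ 2)) := by
  refine ⟨2, by norm_num, ?_⟩
  intro r ρ w hr hρ h1 h16
  have hπ0 := Real.pi_pos
  rw [abs_neg]
  set f : ℝ → ℝ := fun φ => ((ρ * Real.cos φ - r) * Real.cos φ) /
      (4 * π * (r ^ 2 + ρ ^ 2 - 2 * r * ρ * Real.cos φ + w ^ 2) ^ ((3 : ℝ) / 2)) with hf
  by_cases hE : (ρ - r) ^ 2 + w ^ 2 = 0
  · have hρr : ρ = r := by nlinarith [sq_nonneg (ρ - r), sq_nonneg w]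
    have hw : w = 0 := by nlinarith [sq_nonneg (ρ - r), sq_nonneg w]
    subst hρr hw
    rw [intervalIntegral.integral_undef (notint hr)]
    simp only [abs_zero]
    positivity
  have hEpos : 0 < (ρ - r) ^ 2 + w ^ 2 := lt_of_le_of_ne (by positivity) (Ne.symm hE)
  by_cases hInt : IntervalIntegrable f volume 0 (2 * π)
  · -- main case
    set E := (ρ - r) ^ 2 + w ^ 2 with hEdef
    set a := 4 * r * ρ / π ^ 2 with ha
    have hapos : 0 < a := by positivity
    set g : ℝ → ℝ := fun ψ => 1 / (4 * π * (E + a * ψ ^ 2)) with hg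
    have hgc : Continuous g := by
      apply continuous_const.div (by fun_prop)
      intro x; positivity
    have hi1 : IntervalIntegrable f volume 0 π :=
      hInt.mono_set (by
        rw [Set.uIcc_of_le (by linarith : (0:ℝ) ≤ π), Set.uIcc_of_le (by linarith : (0:ℝ) ≤ 2*π)]
        exact Set.Icc_subset_Icc le_rfl (by linarith))
    have hi2 : IntervalIntegrable f volume π (2 * π) := by
      apply hInt.mono_set
      rw [Set.uIcc_of_le (by linarith), Set.uIcc_of_le (by linarith)]
      exact Set.Icc_subset_Icc (by linarith) le_rfl
    have hsplit : (∫ φ in (0:ℝ)..(2*π), f φ)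
        = (∫ φ in (0:ℝ)..π, f φ) + ∫ φ in π..(2*π), f φ :=
      (intervalIntegral.integral_add_adjacent_intervals hi1 hi2).symm
    have hb1 : |∫ φ in (0:ℝ)..π, f φ| ≤ ∫ ψ in (0:ℝ)..π, g ψ := by
      refine (intervalIntegral.abs_integral_le_integral_abs (by linarith)).trans ?_
      apply intervalIntegral.integral_mono_on (by linarith) hi1.abs
        (hgc.intervalIntegrable _ _)
      intro ψ hψ
      exact pointwise_bd hr hρ hψ.1 hψ.2 hEpos
    have hb2 : |∫ φ in π..(2*π), f φ| ≤ ∫ φ in π..(2*π), g (2*π - φ) := by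
      refine (intervalIntegral.abs_integral_le_integral_abs (by linarith)).trans ?_
      apply intervalIntegral.integral_mono_on (by linarith) hi2.abs
        ((hgc.comp (by fun_prop)).intervalIntegrable _ _)
      intro φ hφ
      have hcos : Real.cos φ = Real.cos (2*π - φ) := (Real.cos_two_pi_sub φ).symm
      simp only [hf, hcos]
      exact pointwise_bd hr hρ (by linarith [hφ.2]) (by linarith [hφ.1]) hEpos
    have hflip : (∫ φ in π..(2*π), g (2*π - φ)) = ∫ ψ in (0:ℝ)..π, g ψ := by
      rw [intervalIntegral.integral_comp_sub_left g (2*π),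
        show 2*π - 2*π = 0 by ring, show 2*π - π = π by ring]
    have hint : (∫ ψ in (0:ℝ)..π, g ψ) ≤ 1 / (8 * Real.sqrt E * Real.sqrt a) :=
      int_aux hEpos hapos
    have hEs : 0 < Real.sqrt E := Real.sqrt_pos.mpr hEpos
    have has : 0 < Real.sqrt a := Real.sqrt_pos.mpr hapos
    have hρ16 : ρ ≤ 16 * r := by
      rw [div_le_iff₀ hr] at h16; linarith
    have h8 : ρ ≤ 8 * Real.sqrt a := by
      have hlb : ρ / (2*π) ≤ Real.sqrt a := by
        rw [Real.le_sqrt (by positivity) hapos.le]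
        rw [ha, div_pow, div_le_div_iff₀ (by positivity) (by positivity)]
        nlinarith [mul_le_mul_of_nonneg_right
          (mul_le_mul_of_nonneg_right hρ16 hρ.le) (sq_nonneg π)]
      have h2π : ρ ≤ 2 * π * Real.sqrt a := by
        rw [div_le_iff₀ (by positivity)] at hlb; linarith
      nlinarith [mul_nonneg (sub_nonneg.mpr Real.pi_le_four) has.le]
    calc |∫ φ in (0:ℝ)..(2*π), f φ|
        ≤ |∫ φ in (0:ℝ)..π, f φ| + |∫ φ in π..(2*π), f φ| := by
          rw [hsplit]; exact abs_add_le _ _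
      _ ≤ (∫ ψ in (0:ℝ)..π, g ψ) + ∫ φ in π..(2*π), g (2*π - φ) := add_le_add hb1 hb2
      _ ≤ 2 * (1 / (8 * Real.sqrt E * Real.sqrt a)) := by rw [hflip]; linarith
      _ ≤ 2 / (ρ * Real.sqrt E) := by
          rw [mul_one_div, div_le_div_iff₀ (by positivity) (by positivity)]
          nlinarith [mul_le_mul_of_nonneg_right h8 hEs.le, has.le, hEs.le]
  · rw [intervalIntegral.integral_undef hInt]
    simp only [abs_zero]
    positivity
end
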